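/- With the hypotheses of the previous setup (strictly increasing β, strictly decreasing c, and the condition (c_i - c_{i+1})/(β_{i+1} - β_i) > (c_{i+1} - c_{i+2})/(β_{i+2} - β_{i+1}) for 1 ≤ i ≤ n-2), if c* = c̃_{i*} for some 1 ≤ i* ≤ n-1 (with n ≥ 3), then the unique minimizer of min { β'x : c̃'x ≤ c*, x ∈ 𝕏 } is the vertex x* = e_{i*} (the i*-th standard basis vector), and the optimal value β* equals β_{i*}. -/

import Mathlib

set_option maxHeartbeats 1000000


open Finset

/-- Case II — when c* = c̃_{i*}, the unique minimizer is the vertex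
e_{i*} and the optimal value is β_{i*}. -/
theorem stmt1 (n : ℕ) (hn : 3 ≤ n) (β c : ℕ → ℝ)
    (hβpos : 0 < β 0)
    (hβmono : ∀ i, i + 1 < n → β i < β (i + 1))
    (hcmono : ∀ i, i + 1 < n → c (i + 1) < c i)
    (hcn : 0 ≤ c (n - 1))
    (hconc : ∀ i, i + 2 < n →
      (c (i + 1) - c (i + 2)) / (β (i + 2) - β (i + 1)) <
      (c i - c (i + 1)) / (β (i + 1) - β i))
    (cstar : ℝ) (istar : ℕ) (histar₀ : 1 ≤ istar) (histar : istar + 1 < n)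
    (hcs : cstar = c istar - c (n - 1))
    (xstar : Fin n → ℝ)
    (hxstar : ∀ i : Fin n, xstar i = if i.val = istar then 1 else 0) :
    ((∀ i, 0 ≤ xstar i ∧ xstar i ≤ 1) ∧ ∑ i, xstar i = 1) ∧
    (∑ i : Fin n, (c i.val - c (n - 1)) * xstar i ≤ cstar) ∧
    (∑ i : Fin n, β i.val * xstar i = β istar) ∧
    (∀ x : Fin n → ℝ, ((∀ i, 0 ≤ x i ∧ x i ≤ 1) ∧ ∑ i, x i = 1) →
      (∑ i : Fin n, (c i.val - c (n - 1)) * x i ≤ cstar) →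
      β istar ≤ ∑ i : Fin n, β i.val * x i) ∧
    (∀ x : Fin n → ℝ, ((∀ i, 0 ≤ x i ∧ x i ≤ 1) ∧ ∑ i, x i = 1) →
      (∑ i : Fin n, (c i.val - c (n - 1)) * x i ≤ cstar) →
      x ≠ xstar →
      β istar < ∑ i : Fin n, β i.val * x i) := by
  obtain ⟨i0, rfl⟩ : ∃ m, istar = m + 1 := ⟨istar - 1, by omega⟩
  have hβd : ∀ i, i + 1 < n → 0 < β (i + 1) - β i := fun i h => sub_pos.2 (hβmono i h)
  have hcd : ∀ i, i + 1 < n → 0 < c i - c (i + 1) := fun i h => sub_pos.2 (hcmono i h)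
  have hconc' : ∀ i, i + 2 < n →
      (c (i + 1) - c (i + 2)) * (β (i + 1) - β i) <
      (c i - c (i + 1)) * (β (i + 2) - β (i + 1)) := by
    intro i hi
    have h1 := hβd (i + 1) hi
    have h2 := hβd i (by omega)
    exact (div_lt_div_iff₀ h1 h2).1 (hconc i hi)
  -- adjacent differences around istar = i0 + 1
  have hd1 : 0 < c i0 - c (i0 + 1) := hcd i0 (by omega)
  have he1 : 0 < β (i0 + 1) - β i0 := hβd i0 (by omega)
  have hd2 : 0 < c (i0 + 1) - c (i0 + 2) := hcd (i0 + 1) (by omega)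
  have he2 : 0 < β (i0 + 2) - β (i0 + 1) := hβd (i0 + 1) (by omega)
  have hq := hconc' i0 (by omega)
  set lam : ℝ := ((β (i0 + 1) - β i0) / (c i0 - c (i0 + 1)) +
      (β (i0 + 2) - β (i0 + 1)) / (c (i0 + 1) - c (i0 + 2))) / 2 with hlamdef
  have hA : (β (i0 + 1) - β i0) / (c i0 - c (i0 + 1)) * (c i0 - c (i0 + 1))
      = β (i0 + 1) - β i0 := div_mul_cancel₀ _ (ne_of_gt hd1)
  have hB : (β (i0 + 2) - β (i0 + 1)) / (c (i0 + 1) - c (i0 + 2)) * (c (i0 + 1) - c (i0 + 2))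
      = β (i0 + 2) - β (i0 + 1) := div_mul_cancel₀ _ (ne_of_gt hd2)
  have hABlt : (β (i0 + 1) - β i0) / (c i0 - c (i0 + 1)) <
      (β (i0 + 2) - β (i0 + 1)) / (c (i0 + 1) - c (i0 + 2)) := by
    rw [div_lt_div_iff₀ hd1 hd2]
    linear_combination hq
  have hApos : 0 < (β (i0 + 1) - β i0) / (c i0 - c (i0 + 1)) := div_pos he1 hd1
  have hlampos : 0 < lam := by rw [hlamdef]; linarith
  have hlam1 : β (i0 + 1) - β i0 < lam * (c i0 - c (i0 + 1)) := by
    have h := mul_pos (show 0 < lam - (β (i0 + 1) - β i0) / (c i0 - c (i0 + 1)) by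
      rw [hlamdef]; linarith) hd1
    nlinarith [hA]
  have hlam2 : lam * (c (i0 + 1) - c (i0 + 2)) < β (i0 + 2) - β (i0 + 1) := by
    have h := mul_pos (show 0 < (β (i0 + 2) - β (i0 + 1)) / (c (i0 + 1) - c (i0 + 2)) - lam by
      rw [hlamdef]; linarith) hd2
    nlinarith [hB]
  clear_value lam
  -- step lemmas
  have StepUp : ∀ j, i0 + 1 ≤ j → j + 1 < n → lam * (c j - c (j + 1)) < β (j + 1) - β j := by
    intro j hj
    induction j, hj using Nat.le_induction with
    | base => intro _; exact hlam2
    | succ j hj ih =>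
      intro h2
      have ih' := ih (by omega)
      have hc := hconc' j h2
      have hp := hcd j (by omega)
      have hqj := hβd j (by omega)
      have hr := hcd (j + 1) h2
      have hs := hβd (j + 1) h2
      nlinarith [mul_lt_mul_of_pos_right ih' hr, hc, hp, hqj, hs]
  have StepDownGen : ∀ a, a + 2 < n →
      β (a + 2) - β (a + 1) < lam * (c (a + 1) - c (a + 2)) →
      β (a + 1) - β a < lam * (c a - c (a + 1)) := by
    intro a ha ih
    have hc := hconc' a ha
    have hp := hcd a (by omega)
    have hqj := hβd a (by omega)
    have hr := hcd (a + 1) ha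
    have hs := hβd (a + 1) ha
    nlinarith [mul_lt_mul_of_pos_left ih hp, hc, hp, hqj, hr, hs]
  have StepDown : ∀ m, m ≤ i0 →
      β (i0 - m + 1) - β (i0 - m) < lam * (c (i0 - m) - c (i0 - m + 1)) := by
    intro m
    induction m with
    | zero => intro _; simpa using hlam1
    | succ m ih =>
      intro hm
      obtain ⟨a, ha⟩ : ∃ a, i0 - m = a + 1 := ⟨i0 - m - 1, by omega⟩
      have e1 : i0 - (m + 1) = a := by omega
      have ih' := ih (by omega)
      rw [ha] at ih'
      rw [e1]
      exact StepDownGen a (by omega) ih'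
  -- chord lemmas
  have ChordUp : ∀ k, i0 + 1 < k → k < n →
      lam * (c (i0 + 1) - c k) < β k - β (i0 + 1) := by
    intro k hk
    induction k, hk using Nat.le_induction with
    | base => intro h; simpa using StepUp (i0 + 1) le_rfl (by omega)
    | succ k hk ih =>
      intro hkn
      have ih' := ih (by omega)
      have hst := StepUp k (by omega) hkn
      have : lam * (c (i0 + 1) - c k) + lam * (c k - c (k + 1))
          = lam * (c (i0 + 1) - c (k + 1)) := by ring
      linarith
  have ChordDown : ∀ m, m ≤ i0 →
      lam * (c (i0 + 1) - c (i0 - m)) < β (i0 - m) - β (i0 + 1) := by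
    intro m
    induction m with
    | zero =>
      intro _
      have h0 := StepDown 0 (by omega)
      simp only [Nat.sub_zero] at h0 ⊢
      have : lam * (c (i0 + 1) - c i0) + lam * (c i0 - c (i0 + 1)) = 0 := by ring
      linarith
    | succ m ih =>
      intro hm
      obtain ⟨a, ha⟩ : ∃ a, i0 - m = a + 1 := ⟨i0 - m - 1, by omega⟩
      have e1 : i0 - (m + 1) = a := by omega
      have ih' := ih (by omega)
      rw [ha] at ih'
      have hsd := StepDown (m + 1) hm
      rw [e1] at hsd
      rw [e1]
      have : lam * (c (i0 + 1) - c (a + 1)) - lam * (c a - c (a + 1))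
          = lam * (c (i0 + 1) - c a) := by ring
      linarith
  have key : ∀ k, k < n → k ≠ i0 + 1 →
      lam * (c (i0 + 1) - c k) < β k - β (i0 + 1) := by
    intro k hk hne
    rcases lt_or_gt_of_ne hne with h | h
    · have hm : i0 - (i0 - k) = k := by omega
      have := ChordDown (i0 - k) (by omega)
      rwa [hm] at this
    · exact ChordUp k h hk
  have keyle : ∀ k, k < n →
      lam * (c (i0 + 1) - c k) ≤ β k - β (i0 + 1) := by
    intro k hk
    rcases eq_or_ne k (i0 + 1) with h | h
    · subst h; simp
    · exact le_of_lt (key k hk h)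
  -- the vertex
  have histar' : i0 + 1 < n := by omega
  set iv : Fin n := ⟨i0 + 1, histar'⟩ with hiv
  have hvtx : ∀ f : ℕ → ℝ, ∑ i : Fin n, f i.val * xstar i = f (i0 + 1) := by
    intro f
    have hterm : ∀ i : Fin n, f i.val * xstar i = if i = iv then f i.val else 0 := by
      intro i
      rw [hxstar]
      rcases eq_or_ne i iv with h | h
      · subst h; simp [hiv]
      · have hv : i.val ≠ i0 + 1 := fun hv => h (Fin.ext hv)
        simp [hv, h]
    rw [Finset.sum_congr rfl fun i _ => hterm i, Finset.sum_ite_eq' univ iv]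
    simp [hiv]
  have hsum1 : ∑ i, xstar i = 1 := by
    have := hvtx fun _ => 1
    simpa using this
  -- shared expansion
  have hsum_eq : ∀ x : Fin n → ℝ, ∑ i, x i = 1 →
      ∑ i : Fin n, (β i.val - β (i0 + 1) - lam * (c (i0 + 1) - c i.val)) * x i
      = (∑ i : Fin n, β i.val * x i) - β (i0 + 1)
        - lam * ((c (i0 + 1) - c (n - 1)) - ∑ i : Fin n, (c i.val - c (n - 1)) * x i) := by
    intro x hx
    have hterm : ∀ i : Fin n, (β i.val - β (i0 + 1) - lam * (c (i0 + 1) - c i.val)) * x i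
        = β i.val * x i - (β (i0 + 1) + lam * (c (i0 + 1) - c (n - 1))) * x i
          + lam * ((c i.val - c (n - 1)) * x i) := by
      intro i; ring
    rw [Finset.sum_congr rfl fun i _ => hterm i]
    rw [Finset.sum_add_distrib, Finset.sum_sub_distrib, ← Finset.mul_sum, ← Finset.mul_sum, hx]
    ring
  refine ⟨⟨fun i => ?_, hsum1⟩, ?_, ?_, ?_, ?_⟩
  · rw [hxstar]; split <;> norm_num
  · have := hvtx fun k => c k - c (n - 1)
    rw [this, hcs]
  · exact hvtx fun k => β k
  · rintro x ⟨hxbd, hxsum⟩ hxc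
    have h1 : ∀ i ∈ Finset.univ (α := Fin n),
        (0:ℝ) ≤ (β i.val - β (i0 + 1) - lam * (c (i0 + 1) - c i.val)) * x i := by
      intro i _
      exact mul_nonneg (by linarith [keyle i.val i.isLt]) (hxbd i).1
    have h2 := Finset.sum_nonneg h1
    rw [hsum_eq x hxsum] at h2
    have h3 : 0 ≤ lam * ((c (i0 + 1) - c (n - 1)) - ∑ i : Fin n, (c i.val - c (n - 1)) * x i) := by
      apply mul_nonneg (le_of_lt hlampos)
      rw [hcs] at hxc
      linarith
    linarith
  · rintro x ⟨hxbd, hxsum⟩ hxc hne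
    have hex : ∃ k : Fin n, k.val ≠ i0 + 1 ∧ 0 < x k := by
      by_contra h
      push_neg at h
      apply hne
      funext i
      have hz : ∀ k : Fin n, k ≠ iv → x k = 0 := by
        intro k hk
        have hv : k.val ≠ i0 + 1 := fun hv => hk (Fin.ext hv)
        exact le_antisymm (h k hv) (hxbd k).1
      have hx0 : x iv = 1 := by
        rw [Finset.sum_eq_single iv (fun b _ hb => hz b hb)
          (fun h' => absurd (Finset.mem_univ _) h')] at hxsum
        exact hxsum
      rw [hxstar]
      rcases eq_or_ne i iv with h' | h'
      · subst h'; simp [hx0]; rfl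
      · have hv : i.val ≠ i0 + 1 := fun hv => h' (Fin.ext hv)
        simp [hv, hz i h']
    obtain ⟨k, hk, hxk⟩ := hex
    have h1 : ∀ i ∈ Finset.univ (α := Fin n),
        (0:ℝ) ≤ (β i.val - β (i0 + 1) - lam * (c (i0 + 1) - c i.val)) * x i := by
      intro i _
      exact mul_nonneg (by linarith [keyle i.val i.isLt]) (hxbd i).1
    have h2 : 0 < ∑ i : Fin n, (β i.val - β (i0 + 1) - lam * (c (i0 + 1) - c i.val)) * x i := by
      apply Finset.sum_pos' h1
      exact ⟨k, Finset.mem_univ k, mul_pos (by linarith [key k.val k.isLt hk]) hxk⟩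
    rw [hsum_eq x hxsum] at h2
    have h3 : 0 ≤ lam * ((c (i0 + 1) - c (n - 1)) - ∑ i : Fin n, (c i.val - c (n - 1)) * x i) := by
      apply mul_nonneg (le_of_lt hlampos)
      rw [hcs] at hxc
      linarith
    linarith
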